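/- Suppose t > B⁺ = (b−1)*(a+b) − b*(d+1). Then the cardinality of the Hilbert basis H(O⁺_{t+ρ}) equals the cardinality of H(O⁺_t) plus d*a. -/

import Mathlib

/-- The factorization homomorphism `π_t` for the shifted numerical semigroup
`M_t = ⟨t - d*a, t, t + d*b⟩`, applied to `v = (v0, v1, v2) ∈ ℤ³`. -/
def pi3 (a b d t : ℤ) (v : ℤ × ℤ × ℤ) : ℤ :=
  (t - d * a) * v.1 + t * v.2.1 + (t + d * b) * v.2.2

/-- The length (coordinate sum) `ℓ(v)` of `v ∈ ℤ³`. -/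
def len3 (v : ℤ × ℤ × ℤ) : ℤ := v.1 + v.2.1 + v.2.2

/-- The trade lattice `L_t = ker π_t`. -/
def L3 (a b d t : ℤ) : Set (ℤ × ℤ × ℤ) := {v | pi3 a b d t v = 0}

/-- The orthant `O⁺_t = {v ∈ L_t : v0 ≥ 0, v1 ≥ 0}`. -/
def OPlus (a b d t : ℤ) : Set (ℤ × ℤ × ℤ) :=
  {v ∈ L3 a b d t | 0 ≤ v.1 ∧ 0 ≤ v.2.1}

/-- The orthant `O±_t = {v ∈ L_t : v0 ≥ 0, v2 ≥ 0}`. -/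
def OPm (a b d t : ℤ) : Set (ℤ × ℤ × ℤ) :=
  {v ∈ L3 a b d t | 0 ≤ v.1 ∧ 0 ≤ v.2.2}

/-- The orthant `O⁻_t = {v ∈ L_t : v1 ≥ 0, v2 ≥ 0}`. -/
def OMinus (a b d t : ℤ) : Set (ℤ × ℤ × ℤ) :=
  {v ∈ L3 a b d t | 0 ≤ v.2.1 ∧ 0 ≤ v.2.2}

/-- `φ01(v) = v + b*(a+b)*ℓ(v)*(1, -1, 0)`. -/
def phi01 (a b : ℤ) (v : ℤ × ℤ × ℤ) : ℤ × ℤ × ℤ :=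
  v + (b * (a + b) * len3 v) • ((1 : ℤ), (-1 : ℤ), (0 : ℤ))

/-- `φ02(v) = v + a*b*ℓ(v)*(1, 0, -1)`. -/
def phi02 (a b : ℤ) (v : ℤ × ℤ × ℤ) : ℤ × ℤ × ℤ :=
  v + (a * b * len3 v) • ((1 : ℤ), (0 : ℤ), (-1 : ℤ))

/-- `φ12(v) = v + a*(a+b)*ℓ(v)*(0, 1, -1)`. -/
def phi12 (a b : ℤ) (v : ℤ × ℤ × ℤ) : ℤ × ℤ × ℤ :=
  v + (a * (a + b) * len3 v) • ((0 : ℤ), (1 : ℤ), (-1 : ℤ))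

/-- `v` is reducible in the orthant `O` if it is a sum of two nonzero elements of `O`. -/
def Reducible (O : Set (ℤ × ℤ × ℤ)) (v : ℤ × ℤ × ℤ) : Prop :=
  ∃ u w : ℤ × ℤ × ℤ, u ∈ O ∧ w ∈ O ∧ u ≠ 0 ∧ w ≠ 0 ∧ v = u + w

/-- The Hilbert basis of the orthant `O`: its irreducible elements. -/
def HB (O : Set (ℤ × ℤ × ℤ)) : Set (ℤ × ℤ × ℤ) :=
  {v ∈ O | v ≠ 0 ∧ ¬ Reducible O v}

/-- `Ŝ_t = {v ∈ O±_t : v0 ≤ b or v2 ≤ a}`. -/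
def Shat (a b d t : ℤ) : Set (ℤ × ℤ × ℤ) :=
  {v ∈ OPm a b d t | v.1 ≤ b ∨ v.2.2 ≤ a}

/-- The piecewise map `φ̂`, given by `φ12` when `v0 ≤ b`, and `φ01` otherwise. -/
def phihat (a b : ℤ) (v : ℤ × ℤ × ℤ) : ℤ × ℤ × ℤ :=
  if v.1 ≤ b then phi12 a b v else phi01 a b v



section Aux

def sG (a b : ℤ) (v : ℤ × ℤ) : ℤ := (a + b) * v.1 + b * v.2

def G2 (a b m : ℤ) : Set (ℤ × ℤ) := {v | 0 ≤ v.1 ∧ 0 ≤ v.2 ∧ m ∣ sG a b v}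

def Red2 (S : Set (ℤ × ℤ)) (v : ℤ × ℤ) : Prop :=
  ∃ u w : ℤ × ℤ, u ∈ S ∧ w ∈ S ∧ u ≠ 0 ∧ w ≠ 0 ∧ v = u + w

def HB2 (S : Set (ℤ × ℤ)) : Set (ℤ × ℤ) := {v ∈ S | v ≠ 0 ∧ ¬ Red2 S v}

structure Pack (a b m x0 ymax J yJ : ℤ) : Prop where
  ha : 1 ≤ a
  hb : 1 ≤ b
  hx0 : 0 ≤ x0
  hx0b : x0 < b
  hdvd : m = (a + b) * x0 + b * ymax
  hymax : 0 ≤ ymax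
  hJ : ymax = (a + b) * J + yJ
  hJ0 : 0 ≤ J
  hyJ0 : 0 ≤ yJ
  hyJ : yJ < a + b
  hm0 : 0 < m
  hthr : (b - 1) * (a + b) - b < m

variable {a b m x0 ymax J yJ : ℤ}

lemma sG_add (u w : ℤ × ℤ) : sG a b (u + w) = sG a b u + sG a b w := by
  simp [sG]; ring

lemma sG_nonneg (ha : 1 ≤ a) (hb : 1 ≤ b) {v : ℤ × ℤ} (hv : v ∈ G2 a b m) :
    0 ≤ sG a b v := by
  obtain ⟨h1, h2, _⟩ := hv
  have e1 : (0:ℤ) ≤ (a + b) * v.1 := mul_nonneg (by linarith) h1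
  have e2 : (0:ℤ) ≤ b * v.2 := mul_nonneg (by linarith) h2
  unfold sG; linarith

lemma sG_pos (ha : 1 ≤ a) (hb : 1 ≤ b) {v : ℤ × ℤ} (hv : v ∈ G2 a b m) (hv0 : v ≠ 0) :
    0 < sG a b v := by
  obtain ⟨h1, h2, _⟩ := hv
  rcases lt_or_eq_of_le h1 with h1' | h1'
  · have e1 : (0:ℤ) < (a + b) * v.1 := mul_pos (by linarith) h1'
    have e2 : (0:ℤ) ≤ b * v.2 := mul_nonneg (by linarith) h2
    unfold sG; linarith
  rcases lt_or_eq_of_le h2 with h2' | h2'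
  · have e1 : (0:ℤ) < b * v.2 := mul_pos (by linarith) h2'
    have e2 : (0:ℤ) ≤ (a + b) * v.1 := mul_nonneg (by linarith) h1
    unfold sG; linarith
  · exact absurd (Prod.ext h1'.symm h2'.symm) hv0

lemma sG_lower (ha : 1 ≤ a) (hb : 1 ≤ b) (hm0 : 0 < m) {v : ℤ × ℤ}
    (hv : v ∈ G2 a b m) (hv0 : v ≠ 0) : m ≤ sG a b v :=
  Int.le_of_dvd (sG_pos ha hb hv hv0) hv.2.2

lemma ne_zero_of_sG_pos {v : ℤ × ℤ} (h : 0 < sG a b v) : v ≠ 0 := by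
  rintro rfl; simp [sG] at h

lemma red_of_le (ha : 1 ≤ a) (hb : 1 ≤ b) {v u : ℤ × ℤ} (hv : v ∈ G2 a b m)
    (hu : u ∈ G2 a b m) (hu0 : u ≠ 0) (hne : u ≠ v)
    (h1 : u.1 ≤ v.1) (h2 : u.2 ≤ v.2) : Red2 (G2 a b m) v := by
  refine ⟨u, v - u, hu, ⟨by simp; linarith, by simp; linarith, ?_⟩, hu0, ?_, by ring⟩
  · have h : sG a b (v - u) = sG a b v - sG a b u := by simp [sG]; ring
    rw [h]; exact dvd_sub hv.2.2 hu.2.2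
  · intro h; exact hne (sub_eq_zero.mp h).symm

lemma level1_irr (ha : 1 ≤ a) (hb : 1 ≤ b) (hm0 : 0 < m) {v : ℤ × ℤ}
    (hv : v ∈ G2 a b m) (hs : sG a b v = m) : ¬ Red2 (G2 a b m) v := by
  rintro ⟨u, w, hu, hw, hu0, hw0, rfl⟩
  have h1 := sG_lower ha hb hm0 hu hu0
  have h2 := sG_lower ha hb hm0 hw hw0
  rw [sG_add] at hs; linarith

def pj (a b x0 ymax : ℤ) (j : ℤ) : ℤ × ℤ := (x0 + j * b, ymax - j * (a + b))

lemma pj_mem (P : Pack a b m x0 ymax J yJ) {j : ℤ} (hj0 : 0 ≤ j) (hjJ : j ≤ J) :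
    pj a b x0 ymax j ∈ G2 a b m ∧ sG a b (pj a b x0 ymax j) = m := by
  obtain ⟨ha, hb, hx0, hx0b, hdvd, hymax, hJ, hJ0, hyJ0, hyJ, hm0, hthr⟩ := P
  have hs : sG a b (pj a b x0 ymax j) = m := by
    have h : sG a b (pj a b x0 ymax j) = (a + b) * x0 + b * ymax := by
      simp [sG, pj]; ring
    rw [h]; exact hdvd.symm
  refine ⟨⟨?_, ?_, by rw [hs]⟩, hs⟩
  · show 0 ≤ x0 + j * b
    have := mul_nonneg hj0 (show (0:ℤ) ≤ b by linarith)
    linarith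
  · show 0 ≤ ymax - j * (a + b)
    have := mul_le_mul_of_nonneg_right hjJ (show (0:ℤ) ≤ a + b by linarith)
    linarith

lemma pj_in_HB (P : Pack a b m x0 ymax J yJ) {j : ℤ} (hj0 : 0 ≤ j) (hjJ : j ≤ J) :
    pj a b x0 ymax j ∈ HB2 (G2 a b m) := by
  obtain ⟨hmem, hs⟩ := pj_mem P hj0 hjJ
  exact ⟨hmem, ne_zero_of_sG_pos (by rw [hs]; exact P.hm0),
    level1_irr P.ha P.hb P.hm0 hmem hs⟩

lemma level1_eq (P : Pack a b m x0 ymax J yJ)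
    (hba : ∀ z : ℤ, b ∣ a * z → b ∣ z) {v : ℤ × ℤ}
    (hv : v ∈ G2 a b m) (hs : sG a b v = m) :
    ∃ j : ℤ, 0 ≤ j ∧ j ≤ J ∧ v = pj a b x0 ymax j := by
  obtain ⟨ha, hb, hx0, hx0b, hdvd, hymax, hJ, hJ0, hyJ0, hyJ, hm0, hthr⟩ := P
  obtain ⟨h1, h2, _⟩ := hv
  have hb0 : (0:ℤ) < b := by linarith
  have hdd : b ∣ a * (v.1 - x0) := by
    refine ⟨(ymax - v.2) - (v.1 - x0), ?_⟩
    have h := hs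
    simp only [sG] at h
    linear_combination h + hdvd
  obtain ⟨j, hjj⟩ := hba _ hdd
  have hv1 : v.1 = x0 + j * b := by linarith [hjj]
  have hv2 : v.2 = ymax - j * (a + b) := by
    have h := hs; simp only [sG] at h
    have hb2 : b * v.2 = b * (ymax - j * (a + b)) := by
      linear_combination h + hdvd - (a + b) * hv1
    exact mul_left_cancel₀ hb0.ne' hb2
  refine ⟨j, ?_, ?_, Prod.ext hv1 hv2⟩
  · by_contra hneg
    push_neg at hneg
    have : b * j ≤ b * (-1) := mul_le_mul_of_nonneg_left (by linarith) (by linarith)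
    linarith [hjj]
  · by_contra hcon
    push_neg at hcon
    have : (J + 1) * (a + b) ≤ j * (a + b) :=
      mul_le_mul_of_nonneg_right (by linarith) (by linarith)
    linarith [hv2, h2]

lemma trichotomy (P : Pack a b m x0 ymax J yJ) {v : ℤ × ℤ}
    (hv : v ∈ HB2 (G2 a b m)) :
    sG a b v = m ∨ v.1 < x0 ∨ v.2 < yJ := by
  obtain ⟨hvG, hv0, hirr⟩ := hv
  by_contra hcon
  push_neg at hcon
  obtain ⟨hsm, hx, hy⟩ := hcon
  have hm0 := P.hm0
  have hlow := sG_lower P.ha P.hb hm0 hvG hv0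
  have hs2 : 2 * m ≤ sG a b v := by
    obtain ⟨k, hk⟩ := hvG.2.2
    have hk1 : 1 ≤ k := by
      by_contra hcon'
      push_neg at hcon'
      have h0 : k ≤ 0 := by linarith
      have := mul_le_mul_of_nonneg_left h0 (le_of_lt hm0)
      simp at this; linarith
    have hk2 : 2 ≤ k := by
      rcases eq_or_lt_of_le hk1 with h | h
      · exfalso; apply hsm; rw [hk, ← h, mul_one]
      · linarith
    have := mul_le_mul_of_nonneg_left hk2 (le_of_lt hm0)
    linarith [hk]
  obtain ⟨ha, hb, hx0, hx0b, hdvd, hymax, hJ, hJ0, hyJ0, hyJ, hm0', hthr⟩ := P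
  have hred : ∀ j : ℤ, 0 ≤ j → j ≤ J → (pj a b x0 ymax j).1 ≤ v.1 →
      (pj a b x0 ymax j).2 ≤ v.2 → False := by
    intro j hj0 hjJ hle1 hle2
    obtain ⟨hmem, hs⟩ :=
      pj_mem ⟨ha, hb, hx0, hx0b, hdvd, hymax, hJ, hJ0, hyJ0, hyJ, hm0', hthr⟩ hj0 hjJ
    exact hirr (red_of_le ha hb hvG hmem (ne_zero_of_sG_pos (by rw [hs]; exact hm0'))
      (by intro h; rw [h] at hs; exact hsm hs) hle1 hle2)
  by_cases hcase : x0 + J * b ≤ v.1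
  · exact hred J hJ0 le_rfl hcase (by show ymax - J * (a + b) ≤ v.2; linarith)
  push_neg at hcase
  set j : ℤ := (v.1 - x0) / b with hjdef
  have hb0 : (0:ℤ) < b := by linarith
  have hjb : b * j + (v.1 - x0) % b = v.1 - x0 := Int.mul_ediv_add_emod _ _
  have he0 : 0 ≤ (v.1 - x0) % b := Int.emod_nonneg _ hb0.ne'
  have heb : (v.1 - x0) % b < b := Int.emod_lt_of_pos _ hb0
  set e : ℤ := (v.1 - x0) % b with hedef
  have hj0 : 0 ≤ j := Int.ediv_nonneg (by linarith) (by linarith)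
  have hjJ : j < J := by nlinarith
  have hyv : v.2 < ymax - j * (a + b) := by
    by_contra hge
    push_neg at hge
    refine hred j hj0 hjJ.le ?_ hge
    show x0 + j * b ≤ v.1
    linarith
  have hsv : sG a b v = (a + b) * (x0 + b * j + e) + b * v.2 := by
    simp only [sG]; linear_combination (a + b) * (hjb.symm)
  have hint1 : b * (v.2 + 1) ≤ b * (ymax - j * (a + b)) :=
    mul_le_mul_of_nonneg_left (by linarith) (by linarith)
  have hint2 : (a + b) * e ≤ (a + b) * (b - 1) :=
    mul_le_mul_of_nonneg_left (by linarith) (by linarith)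
  nlinarith [hint1, hint2, hsv, hdvd, hthr, hs2]

lemma G2_finite_HB (ha : 1 ≤ a) (hb : 1 ≤ b) (hm0 : 0 < m) :
    (HB2 (G2 a b m)).Finite := by
  have hsub : HB2 (G2 a b m) ⊆ (Set.Icc (0:ℤ) (b * m)) ×ˢ (Set.Icc (0:ℤ) ((a + b) * m)) := by
    rintro v ⟨hvG, hv0, hirr⟩
    have h1 := hvG.1
    have h2 := hvG.2.1
    have hbm : (0:ℤ) < b * m := mul_pos (by linarith) hm0
    have habm : (0:ℤ) < (a + b) * m := mul_pos (by linarith) hm0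
    constructor
    · refine ⟨h1, ?_⟩
      by_contra hgt
      push_neg at hgt
      have humem : ((b * m, 0) : ℤ × ℤ) ∈ G2 a b m :=
        ⟨by simp; linarith, by simp, ⟨(a + b) * b, by simp [sG]; ring⟩⟩
      have hupos : (0:ℤ) < sG a b ((b * m, 0) : ℤ × ℤ) := by
        simp [sG]
        have : (0:ℤ) < (a + b) * (b * m) := mul_pos (by linarith) hbm
        linarith
      refine hirr (red_of_le ha hb hvG humem (ne_zero_of_sG_pos hupos) ?_ hgt.le h2)
      intro h; rw [← h] at hgt; simp at hgt
    · refine ⟨h2, ?_⟩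
      by_contra hgt
      push_neg at hgt
      have humem : ((0, (a + b) * m) : ℤ × ℤ) ∈ G2 a b m :=
        ⟨by simp, by simp; linarith, ⟨b * (a + b), by simp [sG]; ring⟩⟩
      have hupos : (0:ℤ) < sG a b ((0, (a + b) * m) : ℤ × ℤ) := by
        simp [sG]
        have : (0:ℤ) < b * ((a + b) * m) := mul_pos (by linarith) habm
        linarith
      refine hirr (red_of_le ha hb hvG humem (ne_zero_of_sG_pos hupos) ?_ h1 hgt.le)
      intro h; rw [← h] at hgt; simp at hgt
  exact Set.Finite.subset (Set.Finite.prod (Set.finite_Icc _ _) (Set.finite_Icc _ _)) hsub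

end Aux

section Count

variable {a b m x0 ymax J yJ : ℤ}

lemma hb_count (P : Pack a b m x0 ymax J yJ) (hba : ∀ z : ℤ, b ∣ a * z → b ∣ z) :
    (HB2 (G2 a b m)).ncard =
      ({v ∈ HB2 (G2 a b m) | v.1 < x0}).ncard +
        ({v ∈ HB2 (G2 a b m) | v.2 < yJ}).ncard + (J.toNat + 1) := by
  have hfin := G2_finite_HB P.ha P.hb P.hm0
  set S := HB2 (G2 a b m) with hS
  set L : Set (ℤ × ℤ) := {v ∈ S | v.1 < x0} with hL
  set R : Set (ℤ × ℤ) := {v ∈ S | v.2 < yJ} with hR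
  set Pset : Set (ℤ × ℤ) := (pj a b x0 ymax) '' (Set.Icc (0:ℤ) J) with hPdef
  obtain ⟨ha, hb, hx0, hx0b, hdvd, hymax, hJ, hJ0, hyJ0, hyJ, hm0, hthr⟩ := P
  have P' : Pack a b m x0 ymax J yJ := ⟨ha, hb, hx0, hx0b, hdvd, hymax, hJ, hJ0, hyJ0, hyJ, hm0, hthr⟩
  have hPS : Pset ⊆ S := by
    rintro w ⟨j, hj, rfl⟩
    exact pj_in_HB P' hj.1 hj.2
  have hunion : S = (L ∪ R) ∪ Pset := by
    apply Set.Subset.antisymm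
    · intro v hv
      rcases trichotomy P' hv with h | h | h
      · obtain ⟨j, hj0, hjJ, rfl⟩ := level1_eq P' hba hv.1 h
        exact Or.inr ⟨j, ⟨hj0, hjJ⟩, rfl⟩
      · exact Or.inl (Or.inl ⟨hv, h⟩)
      · exact Or.inl (Or.inr ⟨hv, h⟩)
    · rintro v (h | h)
      · rcases h with h | h
        · exact h.1
        · exact h.1
      · exact hPS h
  have hLR : Disjoint L R := by
    rw [Set.disjoint_left]
    rintro v ⟨hvS, hv1⟩ ⟨_, hv2⟩
    have hvG := hvS.1
    have hlow := sG_lower ha hb hm0 hvG hvS.2.1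
    have e1 : (a + b) * v.1 ≤ (a + b) * (x0 - 1) :=
      mul_le_mul_of_nonneg_left (by linarith) (by linarith)
    have e2 : b * v.2 ≤ b * (yJ - 1) :=
      mul_le_mul_of_nonneg_left (by linarith) (by linarith)
    have e3 : (0:ℤ) ≤ (a + b) * J := mul_nonneg (by linarith) hJ0
    have := hvG
    simp only [sG] at hlow
    nlinarith
  have hLRP : Disjoint (L ∪ R) Pset := by
    rw [Set.disjoint_left]
    rintro v hv ⟨j, ⟨hj0, hjJ⟩, rfl⟩
    have e1 : (0:ℤ) ≤ j * b := mul_nonneg hj0 (by linarith)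
    have e2 : (J - j) * (a + b) ≥ 0 := mul_nonneg (by linarith) (by linarith)
    rcases hv with h | h
    · have := h.2
      simp only [pj] at this
      linarith
    · have := h.2
      simp only [pj] at this
      nlinarith
  have hfinL : L.Finite := hfin.subset (fun v hv => hv.1)
  have hfinR : R.Finite := hfin.subset (fun v hv => hv.1)
  have hfinP : Pset.Finite := hfin.subset hPS
  have hPcard : Pset.ncard = J.toNat + 1 := by
    rw [hPdef, Set.ncard_image_of_injOn]
    · rw [← Finset.coe_Icc, Set.ncard_coe_finset, Int.card_Icc]
      omega
    · intro j hj j' hj' heq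
      have h1 : x0 + j * b = x0 + j' * b := congrArg Prod.fst heq
      have hb0 : (0:ℤ) < b := by linarith
      have : j * b = j' * b := by linarith
      exact mul_right_cancel₀ hb0.ne' this
  rw [hunion, Set.ncard_union_eq hLRP (hfinL.union hfinR) hfinP,
    Set.ncard_union_eq hLR hfinL hfinR, hPcard]

end Count

section Transfer

set_option maxHeartbeats 1000000

lemma mul_pos_of_one_le {x k : ℤ} (hx : 0 < x) (hk : 1 ≤ k) : 0 < x * k := by
  nlinarith [mul_le_mul_of_nonneg_left hk hx.le]

lemma one_le_of_le_mul {x k : ℤ} (hx : 0 < x) (h : x ≤ x * k) : 1 ≤ k := by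
  by_contra hc
  push_neg at hc
  have hk0 : k ≤ 0 := by linarith
  have := mul_le_mul_of_nonneg_left hk0 hx.le
  simp at this
  linarith

def phiR (a b m : ℤ) (v : ℤ × ℤ) : ℤ × ℤ := (v.1 + a * b * (sG a b v / m), v.2)

variable {a b m x0 ymax J yJ : ℤ}

lemma upR (ha : 1 ≤ a) (hb : 1 ≤ b) (hm0 : 0 < m) {v : ℤ × ℤ} (hv : v ∈ G2 a b m) :
    phiR a b m v ∈ G2 a b (m + a * b * (a + b)) ∧
      sG a b (phiR a b m v) = (m + a * b * (a + b)) * (sG a b v / m) := by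
  have hk : m * (sG a b v / m) = sG a b v := Int.mul_ediv_cancel' hv.2.2
  have hk0 : 0 ≤ sG a b v / m := Int.ediv_nonneg (sG_nonneg ha hb hv) hm0.le
  have hs' : sG a b (phiR a b m v) = (m + a * b * (a + b)) * (sG a b v / m) := by
    simp only [phiR, sG] at hk ⊢
    linear_combination -hk
  refine ⟨⟨?_, hv.2.1, ⟨sG a b v / m, hs'⟩⟩, hs'⟩
  have h1 : (0:ℤ) ≤ a * b * (sG a b v / m) :=
    mul_nonneg (mul_nonneg (by linarith) (by linarith)) hk0
  show 0 ≤ v.1 + a * b * (sG a b v / m)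
  linarith [hv.1]

lemma downR (P : Pack a b m x0 ymax J yJ) {u : ℤ × ℤ}
    (hu : u ∈ G2 a b (m + a * b * (a + b))) (hu0 : u ≠ 0) (huy : u.2 < yJ) :
    1 ≤ sG a b u / (m + a * b * (a + b)) ∧
    a * b * (sG a b u / (m + a * b * (a + b))) ≤ u.1 ∧
    ((u.1 - a * b * (sG a b u / (m + a * b * (a + b))), u.2) : ℤ × ℤ) ∈ G2 a b m ∧
    sG a b ((u.1 - a * b * (sG a b u / (m + a * b * (a + b))), u.2) : ℤ × ℤ)
      = m * (sG a b u / (m + a * b * (a + b))) := by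
  obtain ⟨ha, hb, hx0, hx0b, hdvd, hymax, hJ, hJ0, hyJ0, hyJ, hm0, hthr⟩ := P
  have hm'0 : 0 < m + a * b * (a + b) := by
    have h1 : (0:ℤ) < a * b := mul_pos (by linarith) (by linarith)
    have h2 : (0:ℤ) < a * b * (a + b) := mul_pos h1 (by linarith)
    linarith
  have hk : (m + a * b * (a + b)) * (sG a b u / (m + a * b * (a + b))) = sG a b u :=
    Int.mul_ediv_cancel' hu.2.2
  have hlow := sG_lower ha hb hm'0 hu hu0
  have hk1 : 1 ≤ sG a b u / (m + a * b * (a + b)) :=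
    one_le_of_le_mul hm'0 (by linarith)
  set k := sG a b u / (m + a * b * (a + b)) with hkdef
  have hble : a * b * k ≤ u.1 := by
    by_contra hcon
    push_neg at hcon
    have e1 : (a + b) * u.1 ≤ (a + b) * (a * b * k - 1) :=
      mul_le_mul_of_nonneg_left (by linarith) (by linarith)
    have e2 : b * u.2 ≤ b * (yJ - 1) :=
      mul_le_mul_of_nonneg_left (by linarith) (by linarith)
    have e3 : b * yJ ≤ b * (a + b - 1) :=
      mul_le_mul_of_nonneg_left (by linarith) (by linarith)
    have e4 : m * 1 ≤ m * k := mul_le_mul_of_nonneg_left hk1 hm0.le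
    have hsu : sG a b u = (a + b) * u.1 + b * u.2 := rfl
    nlinarith [hk, hsu]
  have hs' : sG a b ((u.1 - a * b * k, u.2) : ℤ × ℤ) = m * k := by
    simp only [sG] at hk ⊢
    linear_combination -hk
  exact ⟨hk1, hble, ⟨by simpa using hble, hu.2.1, ⟨k, hs'⟩⟩, hs'⟩

lemma R_transfer (P : Pack a b m x0 ymax J yJ)
    (P' : Pack a b (m + a * b * (a + b)) x0 (ymax + a * (a + b)) (J + a) yJ) :
    ({v ∈ HB2 (G2 a b (m + a * b * (a + b))) | v.2 < yJ}).ncard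
      = ({v ∈ HB2 (G2 a b m) | v.2 < yJ}).ncard := by
  have ha := P.ha; have hb := P.hb; have hm0 := P.hm0
  have hm'0 : 0 < m + a * b * (a + b) := P'.hm0
  have himg : {v ∈ HB2 (G2 a b (m + a * b * (a + b))) | v.2 < yJ}
      = phiR a b m '' {v ∈ HB2 (G2 a b m) | v.2 < yJ} := by
    ext w
    constructor
    · rintro ⟨⟨hwG, hw0, hwirr⟩, hwy⟩
      obtain ⟨hk1, hble, hdmem, hds⟩ := downR P hwG hw0 hwy
      set k := sG a b w / (m + a * b * (a + b)) with hkdef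
      have hvk : sG a b ((w.1 - a * b * k, w.2) : ℤ × ℤ) / m = k := by
        rw [hds]; exact Int.mul_ediv_cancel_left _ hm0.ne'
      have hv0 : ((w.1 - a * b * k, w.2) : ℤ × ℤ) ≠ 0 :=
        ne_zero_of_sG_pos (by rw [hds]; exact mul_pos_of_one_le hm0 hk1)
      refine ⟨(w.1 - a * b * k, w.2), ⟨⟨hdmem, hv0, ?_⟩, hwy⟩, ?_⟩
      · rintro ⟨u1, u2, hu1, hu2, h10, h20, hsum⟩
        have hkk1 : m * (sG a b u1 / m) = sG a b u1 := Int.mul_ediv_cancel' hu1.2.2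
        have hkk2 : m * (sG a b u2 / m) = sG a b u2 := Int.mul_ediv_cancel' hu2.2.2
        set k1 := sG a b u1 / m
        set k2 := sG a b u2 / m
        have hksum : k1 + k2 = k := by
          have h := congrArg (sG a b) hsum
          rw [sG_add, hds] at h
          have h2 : m * (k1 + k2) = m * k := by rw [mul_add, hkk1, hkk2]; linarith
          exact mul_left_cancel₀ hm0.ne' h2
        have hl1 : 1 ≤ k1 := one_le_of_le_mul hm0 (by linarith [sG_lower ha hb hm0 hu1 h10])
        have hl2 : 1 ≤ k2 := one_le_of_le_mul hm0 (by linarith [sG_lower ha hb hm0 hu2 h20])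
        obtain ⟨hu1m, hu1s⟩ := upR ha hb hm0 hu1
        obtain ⟨hu2m, hu2s⟩ := upR ha hb hm0 hu2
        apply hwirr
        refine ⟨phiR a b m u1, phiR a b m u2, hu1m, hu2m, ?_, ?_, ?_⟩
        · exact ne_zero_of_sG_pos (by rw [hu1s]; exact mul_pos_of_one_le hm'0 hl1)
        · exact ne_zero_of_sG_pos (by rw [hu2s]; exact mul_pos_of_one_le hm'0 hl2)
        · have h1 : w.1 - a * b * k = u1.1 + u2.1 := congrArg Prod.fst hsum
          have h2 : w.2 = u1.2 + u2.2 := congrArg Prod.snd hsum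
          refine Prod.ext ?_ ?_
          · show w.1 = u1.1 + a * b * k1 + (u2.1 + a * b * k2)
            linear_combination h1 - a * b * hksum
          · exact h2
      · show phiR a b m _ = w
        simp only [phiR, hvk]
        exact Prod.ext (by show w.1 - a * b * k + a * b * k = w.1; ring) rfl
    · rintro ⟨v, ⟨⟨hvG, hv0, hvirr⟩, hvy⟩, rfl⟩
      obtain ⟨hupm, hups⟩ := upR ha hb hm0 hvG
      have hkk : m * (sG a b v / m) = sG a b v := Int.mul_ediv_cancel' hvG.2.2
      set k := sG a b v / m with hkdef
      have hk1 : 1 ≤ k := one_le_of_le_mul hm0 (by linarith [sG_lower ha hb hm0 hvG hv0])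
      have hφv0 : phiR a b m v ≠ 0 :=
        ne_zero_of_sG_pos (by rw [hups]; exact mul_pos_of_one_le hm'0 hk1)
      have hφv2 : (phiR a b m v).2 = v.2 := rfl
      refine ⟨⟨hupm, hφv0, ?_⟩, by rw [hφv2]; exact hvy⟩
      rintro ⟨u1, u2, hu1, hu2, h10, h20, hsum⟩
      have hsnd : v.2 = u1.2 + u2.2 := congrArg Prod.snd hsum
      have hu1y : u1.2 < yJ := by linarith [hu2.2.1]
      have hu2y : u2.2 < yJ := by linarith [hu1.2.1]
      obtain ⟨hl1, hb1, hm1, hs1⟩ := downR P hu1 h10 hu1y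
      obtain ⟨hl2, hb2, hm2, hs2⟩ := downR P hu2 h20 hu2y
      have hkk1 : (m + a * b * (a + b)) * (sG a b u1 / (m + a * b * (a + b))) = sG a b u1 :=
        Int.mul_ediv_cancel' hu1.2.2
      have hkk2 : (m + a * b * (a + b)) * (sG a b u2 / (m + a * b * (a + b))) = sG a b u2 :=
        Int.mul_ediv_cancel' hu2.2.2
      set k1 := sG a b u1 / (m + a * b * (a + b))
      set k2 := sG a b u2 / (m + a * b * (a + b))
      have hksum : k1 + k2 = k := by
        have h := congrArg (sG a b) hsum
        rw [sG_add, hups] at h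
        have h2 : (m + a * b * (a + b)) * (k1 + k2) = (m + a * b * (a + b)) * k := by
          rw [mul_add, hkk1, hkk2]; linarith
        exact mul_left_cancel₀ hm'0.ne' h2
      apply hvirr
      refine ⟨(u1.1 - a * b * k1, u1.2), (u2.1 - a * b * k2, u2.2), hm1, hm2, ?_, ?_, ?_⟩
      · exact ne_zero_of_sG_pos (by rw [hs1]; exact mul_pos_of_one_le hm0 hl1)
      · exact ne_zero_of_sG_pos (by rw [hs2]; exact mul_pos_of_one_le hm0 hl2)
      · have h1 : v.1 + a * b * k = u1.1 + u2.1 := congrArg Prod.fst hsum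
        refine Prod.ext ?_ hsnd
        show v.1 = u1.1 - a * b * k1 + (u2.1 - a * b * k2)
        linear_combination h1 + a * b * hksum
  have hinj : Set.InjOn (phiR a b m) {v ∈ HB2 (G2 a b m) | v.2 < yJ} := by
    rintro v ⟨⟨hvG, _, _⟩, _⟩ v' ⟨⟨hv'G, _, _⟩, _⟩ heq
    have h2 := congrArg Prod.snd heq
    simp only [phiR] at h2
    obtain ⟨_, hs⟩ := upR ha hb hm0 hvG
    obtain ⟨_, hs'⟩ := upR ha hb hm0 hv'G
    have hk : sG a b v / m = sG a b v' / m := by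
      have h := congrArg (sG a b) heq
      rw [hs, hs'] at h
      exact mul_left_cancel₀ hm'0.ne' h
    have h1 := congrArg Prod.fst heq
    simp only [phiR] at h1
    rw [hk] at h1
    exact Prod.ext (by linarith) h2
  rw [himg, Set.ncard_image_of_injOn hinj]

end Transfer

section TransferL

set_option maxHeartbeats 1000000

def phiL (a b m : ℤ) (v : ℤ × ℤ) : ℤ × ℤ := (v.1, v.2 + a * (a + b) * (sG a b v / m))

variable {a b m x0 ymax J yJ : ℤ}

lemma upL (ha : 1 ≤ a) (hb : 1 ≤ b) (hm0 : 0 < m) {v : ℤ × ℤ} (hv : v ∈ G2 a b m) :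
    phiL a b m v ∈ G2 a b (m + a * b * (a + b)) ∧
      sG a b (phiL a b m v) = (m + a * b * (a + b)) * (sG a b v / m) := by
  have hk : m * (sG a b v / m) = sG a b v := Int.mul_ediv_cancel' hv.2.2
  have hk0 : 0 ≤ sG a b v / m := Int.ediv_nonneg (sG_nonneg ha hb hv) hm0.le
  have hs' : sG a b (phiL a b m v) = (m + a * b * (a + b)) * (sG a b v / m) := by
    simp only [phiL, sG] at hk ⊢
    linear_combination -hk
  refine ⟨⟨hv.1, ?_, ⟨sG a b v / m, hs'⟩⟩, hs'⟩
  have h1 : (0:ℤ) ≤ a * (a + b) * (sG a b v / m) :=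
    mul_nonneg (mul_nonneg (by linarith) (by linarith)) hk0
  show 0 ≤ v.2 + a * (a + b) * (sG a b v / m)
  linarith [hv.2.1]

lemma downL (P : Pack a b m x0 ymax J yJ) {u : ℤ × ℤ}
    (hu : u ∈ G2 a b (m + a * b * (a + b))) (hu0 : u ≠ 0) (hux : u.1 < x0) :
    1 ≤ sG a b u / (m + a * b * (a + b)) ∧
    a * (a + b) * (sG a b u / (m + a * b * (a + b))) ≤ u.2 ∧
    ((u.1, u.2 - a * (a + b) * (sG a b u / (m + a * b * (a + b)))) : ℤ × ℤ) ∈ G2 a b m ∧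
    sG a b ((u.1, u.2 - a * (a + b) * (sG a b u / (m + a * b * (a + b)))) : ℤ × ℤ)
      = m * (sG a b u / (m + a * b * (a + b))) := by
  obtain ⟨ha, hb, hx0, hx0b, hdvd, hymax, hJ, hJ0, hyJ0, hyJ, hm0, hthr⟩ := P
  have hm'0 : 0 < m + a * b * (a + b) := by
    have h1 : (0:ℤ) < a * b := mul_pos (by linarith) (by linarith)
    have h2 : (0:ℤ) < a * b * (a + b) := mul_pos h1 (by linarith)
    linarith
  have hk : (m + a * b * (a + b)) * (sG a b u / (m + a * b * (a + b))) = sG a b u :=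
    Int.mul_ediv_cancel' hu.2.2
  have hlow := sG_lower ha hb hm'0 hu hu0
  have hk1 : 1 ≤ sG a b u / (m + a * b * (a + b)) :=
    one_le_of_le_mul hm'0 (by linarith)
  set k := sG a b u / (m + a * b * (a + b)) with hkdef
  have hble : a * (a + b) * k ≤ u.2 := by
    by_contra hcon
    push_neg at hcon
    have e1 : (a + b) * u.1 ≤ (a + b) * (x0 - 1) :=
      mul_le_mul_of_nonneg_left (by linarith) (by linarith)
    have e2 : b * u.2 ≤ b * (a * (a + b) * k - 1) :=
      mul_le_mul_of_nonneg_left (by linarith) (by linarith)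
    have e3 : (0:ℤ) ≤ b * ymax := mul_nonneg (by linarith) hymax
    have e4 : m * 1 ≤ m * k := mul_le_mul_of_nonneg_left hk1 hm0.le
    have hsu : sG a b u = (a + b) * u.1 + b * u.2 := rfl
    nlinarith [hk, hsu]
  have hs' : sG a b ((u.1, u.2 - a * (a + b) * k) : ℤ × ℤ) = m * k := by
    simp only [sG] at hk ⊢
    linear_combination -hk
  exact ⟨hk1, hble, ⟨hu.1, by simpa using hble, ⟨k, hs'⟩⟩, hs'⟩

lemma L_transfer (P : Pack a b m x0 ymax J yJ)
    (P' : Pack a b (m + a * b * (a + b)) x0 (ymax + a * (a + b)) (J + a) yJ) :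
    ({v ∈ HB2 (G2 a b (m + a * b * (a + b))) | v.1 < x0}).ncard
      = ({v ∈ HB2 (G2 a b m) | v.1 < x0}).ncard := by
  have ha := P.ha; have hb := P.hb; have hm0 := P.hm0
  have hm'0 : 0 < m + a * b * (a + b) := P'.hm0
  have himg : {v ∈ HB2 (G2 a b (m + a * b * (a + b))) | v.1 < x0}
      = phiL a b m '' {v ∈ HB2 (G2 a b m) | v.1 < x0} := by
    ext w
    constructor
    · rintro ⟨⟨hwG, hw0, hwirr⟩, hwy⟩
      obtain ⟨hk1, hble, hdmem, hds⟩ := downL P hwG hw0 hwy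
      set k := sG a b w / (m + a * b * (a + b)) with hkdef
      have hvk : sG a b ((w.1, w.2 - a * (a + b) * k) : ℤ × ℤ) / m = k := by
        rw [hds]; exact Int.mul_ediv_cancel_left _ hm0.ne'
      have hv0 : ((w.1, w.2 - a * (a + b) * k) : ℤ × ℤ) ≠ 0 :=
        ne_zero_of_sG_pos (by rw [hds]; exact mul_pos_of_one_le hm0 hk1)
      refine ⟨(w.1, w.2 - a * (a + b) * k), ⟨⟨hdmem, hv0, ?_⟩, hwy⟩, ?_⟩
      · rintro ⟨u1, u2, hu1, hu2, h10, h20, hsum⟩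
        have hkk1 : m * (sG a b u1 / m) = sG a b u1 := Int.mul_ediv_cancel' hu1.2.2
        have hkk2 : m * (sG a b u2 / m) = sG a b u2 := Int.mul_ediv_cancel' hu2.2.2
        set k1 := sG a b u1 / m
        set k2 := sG a b u2 / m
        have hksum : k1 + k2 = k := by
          have h := congrArg (sG a b) hsum
          rw [sG_add, hds] at h
          have h2 : m * (k1 + k2) = m * k := by rw [mul_add, hkk1, hkk2]; linarith
          exact mul_left_cancel₀ hm0.ne' h2
        have hl1 : 1 ≤ k1 := one_le_of_le_mul hm0 (by linarith [sG_lower ha hb hm0 hu1 h10])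
        have hl2 : 1 ≤ k2 := one_le_of_le_mul hm0 (by linarith [sG_lower ha hb hm0 hu2 h20])
        obtain ⟨hu1m, hu1s⟩ := upL ha hb hm0 hu1
        obtain ⟨hu2m, hu2s⟩ := upL ha hb hm0 hu2
        apply hwirr
        refine ⟨phiL a b m u1, phiL a b m u2, hu1m, hu2m, ?_, ?_, ?_⟩
        · exact ne_zero_of_sG_pos (by rw [hu1s]; exact mul_pos_of_one_le hm'0 hl1)
        · exact ne_zero_of_sG_pos (by rw [hu2s]; exact mul_pos_of_one_le hm'0 hl2)
        · have h1 : w.1 = u1.1 + u2.1 := congrArg Prod.fst hsum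
          have h2 : w.2 - a * (a + b) * k = u1.2 + u2.2 := congrArg Prod.snd hsum
          refine Prod.ext h1 ?_
          show w.2 = u1.2 + a * (a + b) * k1 + (u2.2 + a * (a + b) * k2)
          linear_combination h2 - a * (a + b) * hksum
      · show phiL a b m _ = w
        simp only [phiL, hvk]
        exact Prod.ext rfl (by show w.2 - a * (a + b) * k + a * (a + b) * k = w.2; ring)
    · rintro ⟨v, ⟨⟨hvG, hv0, hvirr⟩, hvy⟩, rfl⟩
      obtain ⟨hupm, hups⟩ := upL ha hb hm0 hvG
      have hkk : m * (sG a b v / m) = sG a b v := Int.mul_ediv_cancel' hvG.2.2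
      set k := sG a b v / m with hkdef
      have hk1 : 1 ≤ k := one_le_of_le_mul hm0 (by linarith [sG_lower ha hb hm0 hvG hv0])
      have hφv0 : phiL a b m v ≠ 0 :=
        ne_zero_of_sG_pos (by rw [hups]; exact mul_pos_of_one_le hm'0 hk1)
      have hφv1 : (phiL a b m v).1 = v.1 := rfl
      refine ⟨⟨hupm, hφv0, ?_⟩, by rw [hφv1]; exact hvy⟩
      rintro ⟨u1, u2, hu1, hu2, h10, h20, hsum⟩
      have hfst : v.1 = u1.1 + u2.1 := congrArg Prod.fst hsum
      have hu1y : u1.1 < x0 := by linarith [hu2.1]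
      have hu2y : u2.1 < x0 := by linarith [hu1.1]
      obtain ⟨hl1, hb1, hm1, hs1⟩ := downL P hu1 h10 hu1y
      obtain ⟨hl2, hb2, hm2, hs2⟩ := downL P hu2 h20 hu2y
      have hkk1 : (m + a * b * (a + b)) * (sG a b u1 / (m + a * b * (a + b))) = sG a b u1 :=
        Int.mul_ediv_cancel' hu1.2.2
      have hkk2 : (m + a * b * (a + b)) * (sG a b u2 / (m + a * b * (a + b))) = sG a b u2 :=
        Int.mul_ediv_cancel' hu2.2.2
      set k1 := sG a b u1 / (m + a * b * (a + b))
      set k2 := sG a b u2 / (m + a * b * (a + b))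
      have hksum : k1 + k2 = k := by
        have h := congrArg (sG a b) hsum
        rw [sG_add, hups] at h
        have h2 : (m + a * b * (a + b)) * (k1 + k2) = (m + a * b * (a + b)) * k := by
          rw [mul_add, hkk1, hkk2]; linarith
        exact mul_left_cancel₀ hm'0.ne' h2
      apply hvirr
      refine ⟨(u1.1, u1.2 - a * (a + b) * k1), (u2.1, u2.2 - a * (a + b) * k2), hm1, hm2, ?_, ?_, ?_⟩
      · exact ne_zero_of_sG_pos (by rw [hs1]; exact mul_pos_of_one_le hm0 hl1)
      · exact ne_zero_of_sG_pos (by rw [hs2]; exact mul_pos_of_one_le hm0 hl2)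
      · have h2 : v.2 + a * (a + b) * k = u1.2 + u2.2 := congrArg Prod.snd hsum
        refine Prod.ext hfst ?_
        show v.2 = u1.2 - a * (a + b) * k1 + (u2.2 - a * (a + b) * k2)
        linear_combination h2 + a * (a + b) * hksum
  have hinj : Set.InjOn (phiL a b m) {v ∈ HB2 (G2 a b m) | v.1 < x0} := by
    rintro v ⟨⟨hvG, _, _⟩, _⟩ v' ⟨⟨hv'G, _, _⟩, _⟩ heq
    have h1 := congrArg Prod.fst heq
    simp only [phiL] at h1
    obtain ⟨_, hs⟩ := upL ha hb hm0 hvG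
    obtain ⟨_, hs'⟩ := upL ha hb hm0 hv'G
    have hk : sG a b v / m = sG a b v' / m := by
      have h := congrArg (sG a b) heq
      rw [hs, hs'] at h
      exact mul_left_cancel₀ hm'0.ne' h
    have h2 := congrArg Prod.snd heq
    simp only [phiL] at h2
    rw [hk] at h2
    exact Prod.ext h1 (by linarith)
  rw [himg, Set.ncard_image_of_injOn hinj]

end TransferL

section Iterate

variable {a b m x0 ymax J yJ : ℤ}

lemma pack_step (P : Pack a b m x0 ymax J yJ) :
    Pack a b (m + a * b * (a + b)) x0 (ymax + a * (a + b)) (J + a) yJ := by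
  obtain ⟨ha, hb, hx0, hx0b, hdvd, hymax, hJ, hJ0, hyJ0, hyJ, hm0, hthr⟩ := P
  have hab : (0:ℤ) < a * (a + b) := mul_pos (by linarith) (by linarith)
  have hab2 : (0:ℤ) < a * b * (a + b) := mul_pos (mul_pos (by linarith) (by linarith)) (by linarith)
  exact ⟨ha, hb, hx0, hx0b, by linear_combination hdvd, by linarith,
    by linear_combination hJ, by linarith, hyJ0, hyJ, by linarith, by linarith⟩

lemma step_count (P : Pack a b m x0 ymax J yJ) (hba : ∀ z : ℤ, b ∣ a * z → b ∣ z) :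
    (HB2 (G2 a b (m + a * b * (a + b)))).ncard = (HB2 (G2 a b m)).ncard + a.toNat := by
  have P' := pack_step P
  rw [hb_count P hba, hb_count P' hba, R_transfer P P', L_transfer P P']
  have h1 := P.hJ0
  have h2 := P.ha
  omega

lemma iterate_count (P : Pack a b m x0 ymax J yJ) (hba : ∀ z : ℤ, b ∣ a * z → b ∣ z)
    (n : ℕ) :
    (HB2 (G2 a b (m + n * (a * b * (a + b))))).ncard
      = (HB2 (G2 a b m)).ncard + n * a.toNat := by
  induction n with
  | zero => simp
  | succ n ih =>
    have Pn : Pack a b (m + n * (a * b * (a + b))) x0 (ymax + n * (a * (a + b))) (J + n * a) yJ := by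
      obtain ⟨ha, hb, hx0, hx0b, hdvd, hymax, hJ, hJ0, hyJ0, hyJ, hm0, hthr⟩ := P
      have hn : (0:ℤ) ≤ (n:ℤ) := Int.natCast_nonneg n
      have hab : (0:ℤ) ≤ (n:ℤ) * (a * (a + b)) :=
        mul_nonneg hn (mul_nonneg (by linarith) (by linarith))
      have hab2 : (0:ℤ) ≤ (n:ℤ) * (a * b * (a + b)) :=
        mul_nonneg hn (mul_nonneg (mul_nonneg (by linarith) (by linarith)) (by linarith))
      have hna : (0:ℤ) ≤ (n:ℤ) * a := mul_nonneg hn (by linarith)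
      exact ⟨ha, hb, hx0, hx0b, by linear_combination hdvd, by linarith,
        by linear_combination hJ, by linarith, hyJ0, hyJ, by linarith, by linarith⟩
    have hs := step_count Pn hba
    have hmod : m + (↑(n + 1) : ℤ) * (a * b * (a + b))
        = m + (n:ℤ) * (a * b * (a + b)) + a * b * (a + b) := by push_cast; ring
    rw [hmod, hs, ih]
    ring

end Iterate



section OplusTransfer

set_option maxHeartbeats 1000000

lemma oplus_transfer (a b d s : ℤ) (hm0 : 0 < s + d * b)
    (hco : IsCoprime (s + d * b) d) :
    (HB (OPlus a b d s)).ncard = (HB2 (G2 a b (s + d * b))).ncard := by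
  set m := s + d * b with hmdef
  set f : ℤ × ℤ × ℤ → ℤ × ℤ := fun v => (v.1, v.2.1) with hf
  have key1 : ∀ v ∈ OPlus a b d s, f v ∈ G2 a b m := by
    rintro v ⟨hpi, h0, h1⟩
    refine ⟨h0, h1, ?_⟩
    have hdm : m ∣ d * sG a b (f v) := by
      refine ⟨v.1 + v.2.1 + v.2.2, ?_⟩
      have hpi' : (s - d * a) * v.1 + s * v.2.1 + (s + d * b) * v.2.2 = 0 := hpi
      simp only [hf, sG, hmdef]
      linear_combination -hpi'
    exact hco.dvd_of_dvd_mul_left hdm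
  have key2 : ∀ p ∈ G2 a b m, ∃ v ∈ OPlus a b d s, f v = p := by
    rintro p ⟨h0, h1, hdv⟩
    have hdv2 : m ∣ (s - d * a) * p.1 + s * p.2 := by
      have h : (s - d * a) * p.1 + s * p.2 = m * (p.1 + p.2) - d * sG a b p := by
        simp only [sG, hmdef]; ring
      rw [h]
      exact dvd_sub (Dvd.intro _ rfl) (Dvd.dvd.mul_left hdv d)
    refine ⟨(p.1, p.2, -(((s - d * a) * p.1 + s * p.2) / m)), ⟨?_, h0, h1⟩, rfl⟩
    show (s - d * a) * p.1 + s * p.2 + (s + d * b) * -(((s - d * a) * p.1 + s * p.2) / m) = 0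
    rw [← hmdef, mul_neg, Int.mul_ediv_cancel' hdv2]
    ring
  have key3 : ∀ v ∈ OPlus a b d s, ∀ w ∈ OPlus a b d s, f v = f w → v = w := by
    rintro v ⟨hpv, _, _⟩ w ⟨hpw, _, _⟩ heq
    simp only [hf] at heq
    injection heq with h1 h2
    have hpv' : (s - d * a) * v.1 + s * v.2.1 + m * v.2.2 = 0 := hpv
    have hpw' : (s - d * a) * w.1 + s * w.2.1 + m * w.2.2 = 0 := hpw
    have h3 : m * v.2.2 = m * w.2.2 := by rw [h1, h2] at hpv'; linarith
    have h3' : v.2.2 = w.2.2 := mul_left_cancel₀ hm0.ne' h3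
    exact Prod.ext h1 (Prod.ext h2 h3')
  have key4 : ∀ v ∈ OPlus a b d s, (v = 0 ↔ f v = 0) := by
    rintro v ⟨hpv, _, _⟩
    constructor
    · rintro rfl; rfl
    · intro h
      have h1 : v.1 = 0 := congrArg Prod.fst h
      have h2 : v.2.1 = 0 := congrArg Prod.snd h
      have hpv' : (s - d * a) * v.1 + s * v.2.1 + m * v.2.2 = 0 := hpv
      rw [h1, h2] at hpv'
      have h3 : m * v.2.2 = 0 := by linarith
      have h3' : v.2.2 = 0 := by
        rcases mul_eq_zero.mp h3 with h | h
        · exact absurd h hm0.ne'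
        · exact h
      exact Prod.ext h1 (Prod.ext h2 h3')
  have key5 : ∀ u ∈ OPlus a b d s, ∀ w ∈ OPlus a b d s, u + w ∈ OPlus a b d s := by
    rintro u ⟨hpu, hu0, hu1⟩ w ⟨hpw, hw0, hw1⟩
    refine ⟨?_, ?_, ?_⟩
    · show pi3 a b d s (u + w) = 0
      have hpu' : pi3 a b d s u = 0 := hpu
      have hpw' : pi3 a b d s w = 0 := hpw
      simp only [pi3] at hpu' hpw' ⊢
      simp only [Prod.fst_add, Prod.snd_add]
      linarith
    · exact add_nonneg hu0 hw0
    · exact add_nonneg hu1 hw1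
  have hfadd : ∀ u w : ℤ × ℤ × ℤ, f (u + w) = f u + f w := fun u w => rfl
  have himg : f '' HB (OPlus a b d s) = HB2 (G2 a b m) := by
    ext p
    constructor
    · rintro ⟨v, ⟨hvO, hv0, hvirr⟩, rfl⟩
      refine ⟨key1 v hvO, fun h => hv0 ((key4 v hvO).mpr h), ?_⟩
      rintro ⟨p1, p2, hp1, hp2, h10, h20, hsum⟩
      obtain ⟨u1, hu1O, hu1f⟩ := key2 p1 hp1
      obtain ⟨u2, hu2O, hu2f⟩ := key2 p2 hp2
      have hsumO := key5 u1 hu1O u2 hu2O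
      have hfeq : f (u1 + u2) = f v := by rw [hfadd, hu1f, hu2f, ← hsum]
      have hveq : u1 + u2 = v := key3 _ hsumO v hvO hfeq
      apply hvirr
      refine ⟨u1, u2, hu1O, hu2O, ?_, ?_, hveq.symm⟩
      · intro h; apply h10; rw [← hu1f, h]; rfl
      · intro h; apply h20; rw [← hu2f, h]; rfl
    · rintro ⟨hpG, hp0, hpirr⟩
      obtain ⟨v, hvO, hvf⟩ := key2 p hpG
      refine ⟨v, ⟨hvO, ?_, ?_⟩, hvf⟩
      · intro h; rw [h] at hvf; exact hp0 (hvf.symm.trans rfl)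
      · rintro ⟨u1, u2, hu1O, hu2O, h10, h20, hsum⟩
        apply hpirr
        refine ⟨f u1, f u2, key1 u1 hu1O, key1 u2 hu2O, ?_, ?_, ?_⟩
        · intro h; exact h10 ((key4 u1 hu1O).mpr h)
        · intro h; exact h20 ((key4 u2 hu2O).mpr h)
        · rw [← hvf, hsum, hfadd]
  have hinj : Set.InjOn f (HB (OPlus a b d s)) :=
    fun v hv w hw heq => key3 v hv.1 w hw.1 heq
  rw [← himg, Set.ncard_image_of_injOn hinj]

end OplusTransfer

section Main

set_option maxHeartbeats 1000000

lemma build_pack (a b m : ℤ) (ha : 1 ≤ a) (hb : 1 ≤ b) (hab : Int.gcd a b = 1)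
    (hm0 : 0 < m) (hthr : (b - 1) * (a + b) - b < m) :
    ∃ x0 ymax J yJ : ℤ, Pack a b m x0 ymax J yJ := by
  have hb0 : (0:ℤ) < b := by linarith
  have hcop : IsCoprime (a : ℤ) b := Int.isCoprime_iff_gcd_eq_one.mpr hab
  obtain ⟨u, v, huv⟩ := hcop
  set x0 := (u * m) % b with hx0def
  have hx0 : 0 ≤ x0 := Int.emod_nonneg _ hb0.ne'
  have hx0b : x0 < b := Int.emod_lt_of_pos _ hb0
  have hbd : b ∣ m - a * x0 := by
    refine ⟨m * v + a * ((u * m) / b), ?_⟩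
    rw [hx0def, Int.emod_def]
    linear_combination (-m) * huv
  have hx0m : (a + b) * x0 ≤ m := by
    by_cases hx : x0 ≤ b - 2
    · have h1 : (a + b) * x0 ≤ (a + b) * (b - 2) :=
        mul_le_mul_of_nonneg_left hx (by linarith)
      nlinarith
    · have hx0eq : x0 = b - 1 := by omega
      have hbd2 : b ∣ m + a := by
        have h : m + a = (m - a * x0) + a * b := by rw [hx0eq]; ring
        rw [h]
        exact dvd_add hbd ⟨a, by ring⟩
      obtain ⟨w, hw⟩ := hbd2
      have hw1 : b * (a + b - 2) < b * w := by nlinarith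
      have hw2 : a + b - 2 < w := lt_of_mul_lt_mul_left hw1 hb0.le
      nlinarith
  have hbd3 : b ∣ m - (a + b) * x0 := by
    have h : m - (a + b) * x0 = (m - a * x0) - b * x0 := by ring
    rw [h]
    exact dvd_sub hbd ⟨x0, rfl⟩
  set ymax := (m - (a + b) * x0) / b with hymaxdef
  have hym : b * ymax = m - (a + b) * x0 := Int.mul_ediv_cancel' hbd3
  have hymax0 : 0 ≤ ymax := Int.ediv_nonneg (by linarith) hb0.le
  have hab0 : (0:ℤ) < a + b := by linarith
  set J := ymax / (a + b) with hJdef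
  set yJ := ymax % (a + b) with hyJdef
  have hJem : (a + b) * J + yJ = ymax := Int.mul_ediv_add_emod _ _
  exact ⟨x0, ymax, J, yJ, ⟨ha, hb, hx0, hx0b, by linarith, hymax0,
    by linarith, Int.ediv_nonneg hymax0 hab0.le,
    Int.emod_nonneg _ hab0.ne', Int.emod_lt_of_pos _ hab0, hm0, hthr⟩⟩

end Main


theorem ppn_hilbert_basis_count (a b d t : ℤ) (ha : 1 ≤ a) (hb : 1 ≤ b) (hd : 1 ≤ d)
    (hab : Int.gcd a b = 1) (ht : d * a < t) (htd : Int.gcd t d = 1)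
    (hBp : (b - 1) * (a + b) - b * (d + 1) < t) :
    ((HB (OPlus a b d (t + d * a * b * (a + b)))).ncard : ℤ) =
      ((HB (OPlus a b d t)).ncard : ℤ) + d * a := by
  have hda : (0:ℤ) < d * a := mul_pos (by linarith) (by linarith)
  have hdb : (0:ℤ) < d * b := mul_pos (by linarith) (by linarith)
  have hm0 : (0:ℤ) < t + d * b := by linarith
  have hthr : (b - 1) * (a + b) - b < t + d * b := by linarith
  -- coprimality facts
  have hcop_td : IsCoprime t d := Int.isCoprime_iff_gcd_eq_one.mpr htd
  have hco1 : IsCoprime (t + d * b) d := hcop_td.add_mul_left_left b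
  have hco2 : IsCoprime (t + d * a * b * (a + b) + d * b) d := by
    have h := hcop_td.add_mul_left_left (a * b * (a + b) + b)
    have e : t + d * (a * b * (a + b) + b) = t + d * a * b * (a + b) + d * b := by ring
    rwa [e] at h
  have hba : ∀ z : ℤ, b ∣ a * z → b ∣ z := by
    intro z hz
    have hcop : IsCoprime (b : ℤ) a :=
      Int.isCoprime_iff_gcd_eq_one.mpr (by rwa [Int.gcd_comm])
    exact hcop.dvd_of_dvd_mul_left hz
  obtain ⟨x0, ymax, J, yJ, P⟩ := build_pack a b (t + d * b) ha hb hab hm0 hthr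
  -- iterate d times
  have hiter := iterate_count P hba d.toNat
  have hdt : ((d.toNat : ℤ)) = d := Int.toNat_of_nonneg (by linarith)
  have hmod : t + d * b + (d.toNat : ℤ) * (a * b * (a + b))
      = t + d * a * b * (a + b) + d * b := by rw [hdt]; ring
  rw [hmod] at hiter
  have hm0' : (0:ℤ) < t + d * a * b * (a + b) + d * b := by
    have h1 : (0:ℤ) < d * a * b * (a + b) :=
      mul_pos (mul_pos hda (by linarith)) (by linarith)
    linarith
  have h1 := oplus_transfer a b d t hm0 hco1
  have h2 := oplus_transfer a b d (t + d * a * b * (a + b)) hm0' hco2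
  rw [h1, h2, hiter]
  push_cast
  rw [hdt, Int.toNat_of_nonneg (by linarith : (0:ℤ) ≤ a)]
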